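/- Let R be a 0-dimensional affine K-algebra such that K is quasi-perfect for R (i.e., for all a ∈ R the separable part of the minimal polynomial μ_a lies in K[z]). Then every element a ∈ R has a unique decomposition a = b + r with b a separable element of R and r in the Jacobson radical Rad(0) of R; in particular R = R^sep ⊕ Rad(0) as K-vector spaces. -/

import Mathlib

open Polynomial

/-- If `P` is separable and `aeval x P` is nilpotent, then `aeval x P.derivative` is a unit. -/
lemma aux_isUnit_aeval_derivative {K R : Type*} [Field K] [CommRing R] [Algebra K R]
    {P : Polynomial K} (hP : P.Separable) {x : R} (hnil : IsNilpotent (aeval x P)) :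
    IsUnit (aeval x (derivative P)) := by
  obtain ⟨u, v, huv⟩ := hP
  have h : aeval x u * aeval x P + aeval x v * aeval x (derivative P) = 1 := by
    simpa [map_add, map_mul] using congrArg (aeval x) huv
  have h2 : aeval x v * aeval x (derivative P) = 1 - aeval x u * aeval x P := by
    linear_combination h
  have hun : IsUnit (1 - aeval x u * aeval x P) :=
    IsNilpotent.isUnit_one_sub ((Commute.all _ _).isNilpotent_mul_left hnil)
  rw [← h2] at hun
  exact isUnit_of_mul_isUnit_right hun

/-- Let `R` be a 0-dimensional affine `K`-algebra such that `K` is quasi-perfect for `R`,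
i.e. for every `a ∈ R` the separable part of the minimal polynomial `μ_a` already lies in
`K[z]` (here expressed as: there is a separable `g ∈ K[z]` with `g ∣ μ_a` and
`μ_a ∣ g ^ deg μ_a`). Then every `a ∈ R` has a unique decomposition `a = b + r` with `b`
a separable element of `R` and `r` in the Jacobson radical `Rad(0)` of `R`. -/
theorem unique_separable_nilpotent_decomposition {K R : Type*} [Field K] [CommRing R]
    [Algebra K R] [FiniteDimensional K R]
    (hqp : ∀ a : R, ∃ g : Polynomial K, g.Separable ∧ g ∣ minpoly K a ∧
      minpoly K a ∣ g ^ (minpoly K a).natDegree)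
    (a : R) :
    ∃! br : R × R, a = br.1 + br.2 ∧ (minpoly K br.1).Separable ∧
      br.2 ∈ (⊥ : Ideal R).jacobson := by
  classical
  have hart : IsArtinianRing R := isArtinian_of_tower K inferInstance
  -- elements of the Jacobson radical are nilpotent
  have hjacnil : ∀ r : R, r ∈ (⊥ : Ideal R).jacobson → IsNilpotent r := by
    intro r hr
    obtain ⟨n, hn⟩ := IsArtinianRing.isNilpotent_jacobson_bot (R := R)
    refine ⟨n, ?_⟩
    have : r ^ n ∈ ((⊥ : Ideal R).jacobson) ^ n := Ideal.pow_mem_pow hr n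
    rw [hn] at this
    simpa using this
  obtain ⟨g, hgsep, hgdvd, hdvdg⟩ := hqp a
  -- `g(a)` is nilpotent
  have hnil : IsNilpotent (aeval a g) := by
    obtain ⟨q, hq⟩ := hdvdg
    exact ⟨(minpoly K a).natDegree, by rw [← map_pow, hq, map_mul, minpoly.aeval, zero_mul]⟩
  have hunit : IsUnit (aeval a (derivative g)) := aux_isUnit_aeval_derivative hgsep hnil
  obtain ⟨b, ⟨hbnil, hbroot⟩, -⟩ :=
    Polynomial.existsUnique_nilpotent_sub_and_aeval_eq_zero hnil hunit
  refine ⟨(b, a - b), ⟨by ring, ?_, ?_⟩, ?_⟩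
  · -- minpoly of b divides g, hence separable
    exact hgsep.of_dvd (minpoly.dvd K b hbroot)
  · -- a - b is nilpotent, hence in the Jacobson radical
    exact Ideal.radical_le_jacobson (Ideal.mem_radical_iff.mpr
      (by obtain ⟨n, hn⟩ := hbnil; exact ⟨n, by simp [hn]⟩))
  · -- uniqueness
    rintro ⟨b₂, r₂⟩ ⟨heq₂, hsep₂, hr₂⟩
    dsimp only at heq₂ hsep₂ hr₂
    -- reduce to showing b = b₂
    suffices hbb : b₂ = b by
      have : r₂ = a - b := by rw [heq₂, hbb]; ring
      simp [hbb, this]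
    -- b₂ - b is nilpotent
    have hb₂nil : IsNilpotent (b - b₂) := by
      have h1 : IsNilpotent r₂ := hjacnil _ hr₂
      have heq' : b - b₂ = r₂ - (a - b) := by rw [heq₂]; ring
      rw [heq']
      exact Commute.isNilpotent_sub (Commute.all _ _) h1 hbnil
    -- build a common separable polynomial annihilating b and b₂
    set g₁ : Polynomial K := minpoly K b with hg₁
    set g₂ : Polynomial K := minpoly K b₂ with hg₂
    have hg₁sep : g₁.Separable := hgsep.of_dvd (minpoly.dvd K b hbroot)
    have hint : IsIntegral K b₂ := Algebra.IsIntegral.isIntegral b₂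
    have hg₂ne : g₂ ≠ 0 := minpoly.ne_zero hint
    set d : Polynomial K := EuclideanDomain.gcd g₁ g₂ with hd
    have hdg₁ : d ∣ g₁ := EuclideanDomain.gcd_dvd_left _ _
    have hdg₂ : d ∣ g₂ := EuclideanDomain.gcd_dvd_right _ _
    obtain ⟨c, hc⟩ := hdg₂
    have hcsep : c.Separable := hsep₂.of_dvd ⟨d, by rw [hc]; ring⟩
    have hcop : IsCoprime g₁ c := by
      rw [← EuclideanDomain.gcd_isUnit_iff]
      set e := EuclideanDomain.gcd g₁ c with he
      have heg₁ : e ∣ g₁ := EuclideanDomain.gcd_dvd_left _ _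
      have hec : e ∣ c := EuclideanDomain.gcd_dvd_right _ _
      have hed : e ∣ d := EuclideanDomain.dvd_gcd heg₁ (hec.trans ⟨d, by rw [hc]; ring⟩)
      have : e * e ∣ g₂ := by
        rw [hc]
        exact mul_dvd_mul hed hec
      exact hsep₂.squarefree e this
    set h : Polynomial K := g₁ * c with hh
    have hhsep : h.Separable := hg₁sep.mul hcsep hcop
    have hhb : aeval b h = 0 := by
      rw [hh, map_mul, minpoly.aeval, zero_mul]
    have hhb₂ : aeval b₂ h = 0 := by
      have : g₂ ∣ h := by
        obtain ⟨e', he'⟩ := hdg₁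
        exact ⟨e', by rw [hh, hc, he']; ring⟩
      obtain ⟨q, hq⟩ := this
      rw [hq, map_mul, minpoly.aeval, zero_mul]
    -- apply uniqueness in Newton's lemma
    have hnil' : IsNilpotent (aeval b h) := by rw [hhb]; exact IsNilpotent.zero
    have hunit' : IsUnit (aeval b (derivative h)) := aux_isUnit_aeval_derivative hhsep hnil'
    obtain ⟨r, -, hru⟩ :=
      Polynomial.existsUnique_nilpotent_sub_and_aeval_eq_zero hnil' hunit'
    have e1 : b₂ = r := hru b₂ ⟨hb₂nil, hhb₂⟩
    have e2 : b = r := hru b ⟨by simp, hhb⟩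
    rw [e1, e2]
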